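/- Let 0 < δ < e^{−2}. Then the equation (y − 1)e^{−y} = δ has exactly two positive solutions y₁ < y₂, satisfying 1 < y₁ < 2 < y₂; and for σ > 0 the equation σ = δy + y·e^{−y} has exactly three positive solutions y if and only if σ lies strictly between the two values y₂²e^{−y₂} and y₁²e^{−y₁}. -/

import Mathlib

open Real Set Filter

/-- `g y = (y-1) e^{-y}` -/
noncomputable def gfun : ℝ → ℝ := fun y => (y - 1) * Real.exp (-y)

lemma gfun_hasDeriv (y : ℝ) : HasDerivAt gfun ((2 - y) * Real.exp (-y)) y := by
  have h := (((hasDerivAt_id y).sub_const 1).mul ((hasDerivAt_id y).neg.exp))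
  convert h using 1
  · rfl
  · rfl
  · rfl
  simp [Real.exp_ne_zero]
  ring

lemma gfun_cont : Continuous gfun := by unfold gfun; fun_prop

lemma gfun_mono : StrictMonoOn gfun (Iic 2) := by
  apply strictMonoOn_of_deriv_pos (convex_Iic 2) gfun_cont.continuousOn
  intro x hx
  rw [interior_Iic, mem_Iio] at hx
  rw [(gfun_hasDeriv x).deriv]
  have := Real.exp_pos (-x)
  nlinarith

lemma gfun_anti : StrictAntiOn gfun (Ici 2) := by
  apply strictAntiOn_of_deriv_neg (convex_Ici 2) gfun_cont.continuousOn
  intro x hx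
  rw [interior_Ici, mem_Ioi] at hx
  rw [(gfun_hasDeriv x).deriv]
  have := Real.exp_pos (-x)
  nlinarith

/-- `f y = δ y + y e^{-y}` -/
noncomputable def ffun (δ : ℝ) : ℝ → ℝ := fun y => δ * y + y * Real.exp (-y)

lemma ffun_hasDeriv (δ y : ℝ) : HasDerivAt (ffun δ) (δ - gfun y) y := by
  have h := ((hasDerivAt_id y).const_mul δ).add
    ((hasDerivAt_id y).mul ((hasDerivAt_id y).neg.exp))
  convert h using 1
  · rfl
  · rfl
  · rfl
  simp [gfun]
  ring

lemma ffun_cont (δ : ℝ) : Continuous (ffun δ) := by unfold ffun; fun_prop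

lemma encard_pair_le {a b : ℝ} : ({a, b} : Set ℝ).encard ≤ 2 := by
  calc ({a, b} : Set ℝ).encard ≤ ({b} : Set ℝ).encard + 1 := Set.encard_insert_le _ _
  _ ≤ 2 := by rw [Set.encard_singleton]; norm_num

theorem stmt_3 (δ : ℝ) (hδ0 : 0 < δ) (hδ : δ < Real.exp (-2)) :
    ∃ y₁ y₂ : ℝ, y₁ < y₂ ∧ 1 < y₁ ∧ y₁ < 2 ∧ 2 < y₂ ∧
      {y : ℝ | 0 < y ∧ (y - 1) * Real.exp (-y) = δ} = {y₁, y₂} ∧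
      ∀ σ : ℝ, 0 < σ →
        ({y : ℝ | 0 < y ∧ σ = δ * y + y * Real.exp (-y)}.encard = 3 ↔
          y₂ ^ 2 * Real.exp (-y₂) < σ ∧ σ < y₁ ^ 2 * Real.exp (-y₁)) := by
  have hg1 : gfun 1 = 0 := by simp [gfun]
  have hg2 : gfun 2 = Real.exp (-2) := by norm_num [gfun]
  -- y₁
  obtain ⟨y₁, hy₁mem, hgy₁⟩ : ∃ y₁ ∈ Ioo (1:ℝ) 2, gfun y₁ = δ := by
    have := intermediate_value_Ioo (by norm_num : (1:ℝ) ≤ 2) gfun_cont.continuousOn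
    obtain ⟨y, hy, hgy⟩ := this (by rw [hg1, hg2]; exact ⟨hδ0, hδ⟩)
    exact ⟨y, hy, hgy⟩
  obtain ⟨hy₁1, hy₁2⟩ := hy₁mem
  -- find Y beyond which gfun < δ
  obtain ⟨Y, hY2, hgY⟩ : ∃ Y, 2 ≤ Y ∧ gfun Y < δ := by
    have h := Real.tendsto_pow_mul_exp_neg_atTop_nhds_zero 1
    have h2 : ∀ᶠ x in atTop, x ^ 1 * Real.exp (-x) < δ :=
      h.eventually (gt_mem_nhds hδ0)
    obtain ⟨Y, hY1, hY2⟩ := (h2.and (eventually_ge_atTop 2)).exists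
    refine ⟨Y, hY2, ?_⟩
    have : gfun Y ≤ Y ^ 1 * Real.exp (-Y) := by
      simp only [gfun, pow_one]
      have := Real.exp_pos (-Y)
      nlinarith
    linarith
  -- y₂
  obtain ⟨y₂, hy₂mem, hgy₂⟩ : ∃ y₂ ∈ Ioo (2:ℝ) Y, gfun y₂ = δ := by
    have := intermediate_value_Ioo' hY2 gfun_cont.continuousOn
    obtain ⟨y, hy, hgy⟩ := this (by rw [hg2]; exact ⟨hgY, hδ⟩)
    exact ⟨y, hy, hgy⟩
  obtain ⟨hy₂2, hy₂Y⟩ := hy₂mem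
  have hy₁y₂ : y₁ < y₂ := hy₁2.trans hy₂2
  have hy₁0 : 0 < y₁ := by linarith
  have hy₂0 : 0 < y₂ := by linarith
  refine ⟨y₁, y₂, hy₁y₂, hy₁1, hy₁2, hy₂2, ?_, ?_⟩
  · -- two-solution set equality
    ext y
    simp only [mem_setOf_eq, mem_insert_iff, mem_singleton_iff]
    constructor
    · rintro ⟨hy0, hy⟩
      have hy' : gfun y = δ := hy
      have hy1 : 1 < y := by
        by_contra h
        push_neg at h
        have : gfun y ≤ 0 := by
          have := Real.exp_pos (-y)
          simp only [gfun]; nlinarith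
        linarith
      rcases le_or_gt y 2 with h2 | h2
      · left
        exact gfun_mono.injOn h2 (le_of_lt hy₁2) (hy'.trans hgy₁.symm)
      · right
        exact gfun_anti.injOn (le_of_lt h2) (le_of_lt hy₂2) (hy'.trans hgy₂.symm)
    · rintro (rfl | rfl)
      exacts [⟨hy₁0, hgy₁⟩, ⟨hy₂0, hgy₂⟩]
  · -- the σ part
    intro σ hσ0
    set f := ffun δ with hf
    have hSset : {y : ℝ | 0 < y ∧ σ = δ * y + y * Real.exp (-y)}
        = {y : ℝ | 0 < y ∧ f y = σ} := by
      ext y; simp only [mem_setOf_eq, ffun, hf]; tauto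
    rw [hSset]
    set S := {y : ℝ | 0 < y ∧ f y = σ} with hS
    -- monotonicity of f on the three intervals
    have mono1 : StrictMonoOn f (Icc 0 y₁) := by
      apply strictMonoOn_of_deriv_pos (convex_Icc 0 y₁) (ffun_cont δ).continuousOn
      intro x hx
      rw [interior_Icc, mem_Ioo] at hx
      rw [(ffun_hasDeriv δ x).deriv]
      have : gfun x < gfun y₁ :=
        gfun_mono (by simp; linarith) (by simp; linarith) hx.2
      rw [hgy₁] at this; linarith
    have anti : StrictAntiOn f (Icc y₁ y₂) := by
      apply strictAntiOn_of_deriv_neg (convex_Icc y₁ y₂) (ffun_cont δ).continuousOn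
      intro x hx
      rw [interior_Icc, mem_Ioo] at hx
      rw [(ffun_hasDeriv δ x).deriv]
      have : δ < gfun x := by
        rcases le_or_gt x 2 with h2 | h2
        · have : gfun y₁ < gfun x := gfun_mono (by simp; linarith) (mem_Iic.2 h2) hx.1
          rw [hgy₁] at this; linarith
        · have : gfun y₂ < gfun x := gfun_anti (le_of_lt h2) (le_of_lt hy₂2) hx.2
          rw [hgy₂] at this; linarith
      linarith
    have mono2 : StrictMonoOn f (Ici y₂) := by
      apply strictMonoOn_of_deriv_pos (convex_Ici y₂) (ffun_cont δ).continuousOn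
      intro x hx
      rw [interior_Ici, mem_Ioi] at hx
      rw [(ffun_hasDeriv δ x).deriv]
      have : gfun x < gfun y₂ := gfun_anti (le_of_lt hy₂2) (by simp; linarith) hx
      rw [hgy₂] at this; linarith
    -- key values
    have hf0 : f 0 = 0 := by simp [hf, ffun]
    have fval1 : f y₁ = y₁ ^ 2 * Real.exp (-y₁) := by
      simp only [hf, ffun, ← hgy₁, gfun]; ring
    have fval2 : f y₂ = y₂ ^ 2 * Real.exp (-y₂) := by
      simp only [hf, ffun, ← hgy₂, gfun]; ring
    have hf21 : f y₂ < f y₁ := anti (left_mem_Icc.2 hy₁y₂.le) (right_mem_Icc.2 hy₁y₂.le) hy₁y₂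
    have hf2pos : 0 < f y₂ := by
      rw [fval2]; positivity
    rw [← fval1, ← fval2]
    constructor
    · -- encard = 3 → condition, by contrapositive
      intro h3
      by_contra hc
      push_neg at hc
      have hle2 : S.encard ≤ 2 := by
        rcases lt_or_ge (f y₂) σ with hcase | hcase
        · -- σ ≥ f y₁ case
          have hσ1 : f y₁ ≤ σ := hc hcase
          -- find c' in (y₂, ∞)
          obtain ⟨Y', hY'1, hY'2⟩ : ∃ Y', y₂ ≤ Y' ∧ σ < f Y' := by
            refine ⟨max (y₂ + 1) (σ / δ + 1), le_max_of_le_left (by linarith), ?_⟩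
            set Z := max (y₂ + 1) (σ / δ + 1)
            have hZ0 : 0 < Z := lt_of_lt_of_le (by linarith) (le_max_left _ _)
            have hZσ : σ / δ < Z := lt_of_lt_of_le (by linarith) (le_max_right _ _)
            have h1 : σ < δ * Z := by
              rw [div_lt_iff₀ hδ0] at hZσ; linarith [mul_comm δ Z]
            have h2 : 0 ≤ Z * Real.exp (-Z) := by positivity
            simp only [hf, ffun]; linarith
          obtain ⟨c', hc'mem, hc'⟩ := intermediate_value_Ioo hY'1 (ffun_cont δ).continuousOn
            (mem_Ioo.2 ⟨hcase, hY'2⟩)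
          have hsub : S ⊆ {y₁, c'} := by
            rintro y ⟨hy0, hyf⟩
            simp only [mem_insert_iff, mem_singleton_iff]
            rcases lt_trichotomy y y₁ with h | h | h
            · exfalso
              have : f y < f y₁ := mono1 ⟨hy0.le, h.le⟩ ⟨hy₁0.le, le_refl _⟩ h
              linarith
            · exact Or.inl h
            rcases le_or_gt y y₂ with h2 | h2
            · exfalso
              have : f y < f y₁ := anti ⟨le_refl _, hy₁y₂.le⟩ ⟨h.le, h2⟩ h
              linarith
            · right
              exact mono2.injOn h2.le hc'mem.1.le (hyf.trans hc'.symm)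
          exact (Set.encard_mono hsub).trans encard_pair_le
        · -- σ ≤ f y₂ case
          obtain ⟨a', ha'mem, ha'⟩ := intermediate_value_Ioo hy₁0.le
            (ffun_cont δ).continuousOn
            (mem_Ioo.2 ⟨by simpa [ffun] using hσ0, by linarith⟩)
          have hsub : S ⊆ {a', y₂} := by
            rintro y ⟨hy0, hyf⟩
            simp only [mem_insert_iff, mem_singleton_iff]
            rcases lt_trichotomy y y₂ with h | h | h
            · rcases lt_or_ge y y₁ with h1 | h1
              · left
                exact mono1.injOn ⟨hy0.le, h1.le⟩ ⟨ha'mem.1.le, ha'mem.2.le⟩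
                  (hyf.trans ha'.symm)
              · exfalso
                have : f y₂ < f y := anti ⟨h1, h.le⟩ ⟨hy₁y₂.le, le_refl _⟩ h
                linarith
            · exact Or.inr h
            · exfalso
              have : f y₂ < f y := mono2 (mem_Ici.2 (le_refl _)) h.le h
              linarith
          exact (Set.encard_mono hsub).trans encard_pair_le
      rw [h3] at hle2
      norm_num at hle2
    · -- condition → encard = 3
      rintro ⟨hσ2, hσ1⟩
      obtain ⟨a, hamem, ha⟩ := intermediate_value_Ioo hy₁0.le (ffun_cont δ).continuousOn
        (mem_Ioo.2 ⟨by simpa [ffun] using hσ0, hσ1⟩)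
      obtain ⟨b, hbmem, hb⟩ := intermediate_value_Ioo' hy₁y₂.le (ffun_cont δ).continuousOn
        (mem_Ioo.2 ⟨hσ2, hσ1⟩)
      obtain ⟨Y', hY'1, hY'2⟩ : ∃ Y', y₂ ≤ Y' ∧ σ < f Y' := by
        refine ⟨max (y₂ + 1) (σ / δ + 1), le_max_of_le_left (by linarith), ?_⟩
        set Z := max (y₂ + 1) (σ / δ + 1)
        have hZ0 : 0 < Z := lt_of_lt_of_le (by linarith) (le_max_left _ _)
        have hZσ : σ / δ < Z := lt_of_lt_of_le (by linarith) (le_max_right _ _)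
        have h1 : σ < δ * Z := by
          rw [div_lt_iff₀ hδ0] at hZσ; linarith [mul_comm δ Z]
        have h2 : 0 ≤ Z * Real.exp (-Z) := by positivity
        simp only [hf, ffun]; linarith
      obtain ⟨c, hcmem, hcf⟩ := intermediate_value_Ioo hY'1 (ffun_cont δ).continuousOn
        (mem_Ioo.2 ⟨hσ2, hY'2⟩)
      have hab : a < b := lt_trans hamem.2 hbmem.1
      have hbc : b < c := lt_trans hbmem.2 hcmem.1
      rw [Set.encard_eq_three]
      refine ⟨a, b, c, ne_of_lt hab, ne_of_lt (hab.trans hbc), ne_of_lt hbc, ?_⟩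
      ext y
      simp only [hS, mem_setOf_eq, mem_insert_iff, mem_singleton_iff]
      constructor
      · rintro ⟨hy0, hyf⟩
        have hyy₁ : y ≠ y₁ := by
          rintro rfl; linarith
        have hyy₂ : y ≠ y₂ := by
          rintro rfl; linarith
        rcases lt_trichotomy y y₁ with h | h | h
        · left
          exact mono1.injOn ⟨hy0.le, h.le⟩ ⟨hamem.1.le, hamem.2.le⟩ (hyf.trans ha.symm)
        · exact absurd h hyy₁
        rcases lt_trichotomy y y₂ with h2 | h2 | h2
        · right; left
          exact anti.injOn ⟨h.le, h2.le⟩ ⟨hbmem.1.le, hbmem.2.le⟩ (hyf.trans hb.symm)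
        · exact absurd h2 hyy₂
        · right; right
          exact mono2.injOn h2.le hcmem.1.le (hyf.trans hcf.symm)
      · rintro (rfl | rfl | rfl)
        · exact ⟨hamem.1, ha⟩
        · exact ⟨by linarith [hbmem.1], hb⟩
        · exact ⟨by linarith [hcmem.1], hcf⟩
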